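/- Let Σ be a finite alphabet of size q, let X ⊆ Σ^m, let ε ≥ 0, and let F be the family of subsets I ⊆ [m] such that X|_I (viewed as a subset of Σ^I) is prefix thick with degree (1/2+ε)·q. Then |F|/2^m ≥ 2^{−2·log₂(e)·ε·m}·|X|/q^m. -/

import Mathlib

/-! ### Basic objects: Boolean functions, matrices, compositions -/

/-- Boolean functions on `n`-bit strings. -/
abbrev BFunc (n : ℕ) : Type := (Fin n → Bool) → Bool

/-- Boolean `m × n` matrices, viewed as tuples of rows. -/
abbrev BMat (m n : ℕ) : Type := Fin m → Fin n → Bool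

/-- The column vector obtained by applying `g` to every row of `X`. -/
def gRows {m n : ℕ} (g : BFunc n) (X : BMat m n) : Fin m → Bool := fun i => g (X i)

/-- The composition `f ⋄ g` applied to a matrix `X`. -/
def compFG {m n : ℕ} (f : BFunc m) (g : BFunc n) (X : BMat m n) : Bool := f (gRows g X)

/-- A Boolean function is non-constant. -/
def NonConst {k : ℕ} (f : BFunc k) : Prop := (∃ x, f x = true) ∧ (∃ x, f x = false)

/-- A Boolean function on `n` bits is balanced if it has exactly `2^(n-1)` ones. -/
def IsBalanced {n : ℕ} (g : BFunc n) : Prop := {x | g x = true}.ncard = 2 ^ (n - 1)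

/-- The set `V₀` of balanced functions. -/
def BalancedFuncs (n : ℕ) : Set (BFunc n) := {g | IsBalanced g}

/-- The set of matrices `X` with `g(X) = a`. -/
def ginv {m n : ℕ} (g : BFunc n) (a : Fin m → Bool) : Set (BMat m n) := {X | gRows g X = a}

/-! ### De Morgan formulas and formula complexity -/

/-- De Morgan formulas over `m` variables: leaves are literals, gates are AND/OR. -/
inductive DMF (m : ℕ) : Type where
  | lit (i : Fin m) (pos : Bool)
  | and (l r : DMF m)
  | or (l r : DMF m)

namespace DMF

/-- Size of a formula: its number of leaves. -/
def size {m : ℕ} : DMF m → ℕ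
  | lit _ _ => 1
  | and l r => l.size + r.size
  | or l r => l.size + r.size

/-- Evaluation of a formula. -/
def eval {m : ℕ} : DMF m → (Fin m → Bool) → Bool
  | lit i pos, x => if pos then x i else !(x i)
  | and l r, x => l.eval x && r.eval x
  | or l r, x => l.eval x || r.eval x

end DMF

/-- `L(f)`: the minimal size of a de Morgan formula computing `f`. -/
noncomputable def Lfun {m : ℕ} (f : BFunc m) : ℕ :=
  sInf {s | ∃ φ : DMF m, φ.size = s ∧ ∀ x, φ.eval x = f x}

/-- `L(A × B)`: the minimal size of a de Morgan formula separating `A` from `B`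
(`0` if `A` or `B` is empty). -/
noncomputable def Lrect {m : ℕ} (A B : Set (Fin m → Bool)) : ℕ :=
  open Classical in
  if A.Nonempty ∧ B.Nonempty then
    sInf {s | ∃ φ : DMF m, φ.size = s ∧
      (∀ a ∈ A, φ.eval a = true) ∧ (∀ b ∈ B, φ.eval b = false)}
  else 0

/-! ### Deterministic communication protocols -/

/-- A deterministic communication protocol tree: at each internal vertex the
indicated player sends a bit determined by her input. -/
inductive Prot (X Y O : Type) : Type where
  | leaf (o : O)
  | alice (s : X → Bool) (c : Bool → Prot X Y O)
  | bob (s : Y → Bool) (c : Bool → Prot X Y O)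

namespace Prot

variable {X Y O : Type}

/-- Depth of a protocol tree. -/
def depth : Prot X Y O → ℕ
  | leaf _ => 0
  | alice _ c => 1 + max (c false).depth (c true).depth
  | bob _ c => 1 + max (c false).depth (c true).depth

/-- Running a protocol on a pair of inputs. -/
def run : Prot X Y O → X → Y → O
  | leaf o, _, _ => o
  | alice s c, x, y => (c (s x)).run x y
  | bob s c, x, y => (c (s y)).run x y

/-- A protocol solves a relation if on every input pair it outputs a valid solution. -/
def Solves (p : Prot X Y O) (R : X → Y → O → Prop) : Prop :=
  ∀ x y, R x y (p.run x y)

/-- Alice's input `x` is consistent with the transcript `tr`. -/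
def ConsA : Prot X Y O → List Bool → X → Prop
  | _, [], _ => True
  | leaf _, _ :: _, _ => False
  | alice s c, b :: tr, x => s x = b ∧ ConsA (c b) tr x
  | bob _ c, b :: tr, x => ConsA (c b) tr x

/-- Bob's input `y` is consistent with the transcript `tr`. -/
def ConsB : Prot X Y O → List Bool → Y → Prop
  | _, [], _ => True
  | leaf _, _ :: _, _ => False
  | alice _ c, b :: tr, y => ConsB (c b) tr y
  | bob s c, b :: tr, y => s y = b ∧ ConsB (c b) tr y

/-- `tr` is a (possibly partial) transcript of `p`: each player has a consistent input. -/
def IsTranscript (p : Prot X Y O) (tr : List Bool) : Prop :=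
  (∃ x, ConsA p tr x) ∧ (∃ y, ConsB p tr y)

end Prot

/-- `C(R)`: the deterministic communication complexity of a relation. -/
noncomputable def CC {X Y O : Type} (R : X → Y → O → Prop) : ℕ :=
  sInf {d | ∃ p : Prot X Y O, p.Solves R ∧ p.depth = d}

/-! ### Karchmer–Wigderson compositions and multiplexor compositions -/

/-- The relation `KW_f ⋄ KW_g`. -/
def KWdiam {m n : ℕ} (f : BFunc m) (g : BFunc n) :
    {X : BMat m n // compFG f g X = true} → {Y : BMat m n // compFG f g Y = false} →
      Fin m × Fin n → Prop :=
  fun X Y o => X.1 o.1 o.2 ≠ Y.1 o.1 o.2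

/-- The strong composition `KW_f ⊛ KW_g`. -/
def KWstrong {m n : ℕ} (f : BFunc m) (g : BFunc n) :
    {X : BMat m n // compFG f g X = true} → {Y : BMat m n // compFG f g Y = false} →
      Fin m × Fin n → Prop :=
  fun X Y o => X.1 o.1 o.2 ≠ Y.1 o.1 o.2 ∧ g (X.1 o.1) ≠ g (Y.1 o.1)

/-- Alice's inputs in the multiplexor compositions: a function `g` and a matrix `X`
with `(f ⋄ g)(X) = 1`. -/
def AliceMux (m n : ℕ) (f : BFunc m) : Type :=
  {p : BFunc n × BMat m n // compFG f p.1 p.2 = true}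

/-- Bob's inputs in the multiplexor compositions. -/
def BobMux (m n : ℕ) (f : BFunc m) : Type :=
  {p : BFunc n × BMat m n // compFG f p.1 p.2 = false}

/-- The relation `KW_f ⋄ MUX_n` (output `none` plays the role of `⊥`). -/
def MuxDiam {m n : ℕ} (f : BFunc m) :
    AliceMux m n f → BobMux m n f → Option (Fin m × Fin n) → Prop :=
  fun x y o =>
    match o with
    | none => x.1.1 ≠ y.1.1
    | some (i, j) => x.1.2 i j ≠ y.1.2 i j

/-- The strong multiplexor composition `KW_f ⊛ MUX_n`. -/
def MuxStrong {m n : ℕ} (f : BFunc m) :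
    AliceMux m n f → BobMux m n f → Option (Fin m × Fin n) → Prop :=
  fun x y o =>
    match o with
    | none => x.1.1 ≠ y.1.1
    | some (i, j) => x.1.2 i j ≠ y.1.2 i j ∧ x.1.1 (x.1.2 i) ≠ y.1.1 (y.1.2 i)

/-- The function part of Alice's multiplexor input. -/
def muxGA {m n : ℕ} {f : BFunc m} (x : AliceMux m n f) : BFunc n := x.1.1

/-- The function part of Bob's multiplexor input. -/
def muxGB {m n : ℕ} {f : BFunc m} (y : BobMux m n f) : BFunc n := y.1.1

/-! ### Half-duplex protocols with adversary -/

/-- One player's tree in a half-duplex protocol: at each internal vertex, the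
player's input determines whether she sends a bit (`some b`) or receives (`none`);
the four children are indexed by (isSend, bit). -/
inductive HDTree (X O : Type) : Type where
  | leaf (o : O)
  | node (act : X → Option Bool) (child : Bool → Bool → HDTree X O)

namespace HDTree

variable {X O : Type}

/-- The tree is full of depth `d`: every leaf is at distance exactly `d` from the root. -/
inductive IsFull : HDTree X O → ℕ → Prop where
  | leaf (o : O) : IsFull (leaf o) 0
  | node {act : X → Option Bool} {child : Bool → Bool → HDTree X O} {d : ℕ}
      (h : ∀ s b, IsFull (child s b) d) : IsFull (node act child) (d + 1)

/-- The input `x` is consistent with the transcript `tr`: there is a vertex at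
depth `|tr|` reachable on `x` along edges labeled `send(trᵢ)` or `receive(trᵢ)`. -/
def Cons : HDTree X O → List Bool → X → Prop
  | _, [], _ => True
  | leaf _, _ :: _, _ => False
  | node act child, b :: tr, x =>
      match act x with
      | some c => c = b ∧ Cons (child true b) tr x
      | none => Cons (child false b) tr x

end HDTree

/-- One round of a half-duplex execution; `ab` are the bits delivered by the
adversary in case the round is silent. -/
def hdStep {X Y O : Type} (tA : HDTree X O) (tB : HDTree Y O) (x : X) (y : Y)
    (ab : Bool × Bool) : HDTree X O × HDTree Y O :=
  match tA, tB with
  | HDTree.node actA chA, HDTree.node actB chB =>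
      ⟨match actA x with
        | some b => chA true b
        | none => chA false ((actB y).getD ab.1),
       match actB y with
        | some b => chB true b
        | none => chB false ((actA x).getD ab.2)⟩
  | tA, tB => (tA, tB)

/-- Running a half-duplex execution for `d` rounds against the adversary `adv`. -/
def hdRun {X Y O : Type} :
    ℕ → (ℕ → Bool × Bool) → HDTree X O → HDTree Y O → X → Y → HDTree X O × HDTree Y O
  | 0, _, tA, tB, _, _ => (tA, tB)
  | d + 1, adv, tA, tB, x, y =>
      hdRun d (fun i => adv (i + 1)) (hdStep tA tB x y (adv 0)).1 (hdStep tA tB x y (adv 0)).2 x y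

/-- The current round is classical: exactly one of the players sends. -/
def ClassicalRound {X Y O : Type} (tA : HDTree X O) (tB : HDTree Y O) (x : X) (y : Y) : Prop :=
  match tA, tB with
  | HDTree.node actA _, HDTree.node actB _ => (actA x).isSome ≠ (actB y).isSome
  | _, _ => True

/-- All rounds of the `d`-round execution on `(x, y)` against `adv` are classical. -/
def AllClassical {X Y O : Type} :
    ℕ → (ℕ → Bool × Bool) → HDTree X O → HDTree Y O → X → Y → Prop
  | 0, _, _, _, _, _ => True
  | d + 1, adv, tA, tB, x, y =>
      ClassicalRound tA tB x y ∧
        AllClassical d (fun i => adv (i + 1)) (hdStep tA tB x y (adv 0)).1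
          (hdStep tA tB x y (adv 0)).2 x y

/-- A half-duplex protocol of depth `d`: a pair of full 4-ary trees of depth `d`. -/
structure HDProt (X Y O : Type) (d : ℕ) where
  alice : HDTree X O
  bob : HDTree Y O
  fullA : alice.IsFull d
  fullB : bob.IsFull d

namespace HDProt

variable {X Y O : Type} {d : ℕ}

/-- The protocol solves the relation `R`: in every execution against every adversary,
both players reach leaves labeled with a common output that is valid for the inputs. -/
def Solves (P : HDProt X Y O d) (R : X → Y → O → Prop) : Prop :=
  ∀ x y adv, ∃ o : O,
    (hdRun d adv P.alice P.bob x y).1 = HDTree.leaf o ∧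
    (hdRun d adv P.alice P.bob x y).2 = HDTree.leaf o ∧ R x y o

/-- The protocol is partially half-duplex with respect to the function parts
`gA`, `gB` of the inputs: when `gA x = gB y`, all rounds are classical. -/
def PartiallyHD {G : Type} (P : HDProt X Y O d) (gA : X → G) (gB : Y → G) : Prop :=
  ∀ x y adv, gA x = gB y → AllClassical d adv P.alice P.bob x y

/-- `tr` is a (possibly partial) transcript of `P`. -/
def IsTranscript (P : HDProt X Y O d) (tr : List Bool) : Prop :=
  (∃ x, P.alice.Cons tr x) ∧ (∃ y, P.bob.Cons tr y)

end HDProt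

/-- Partially half-duplex communication complexity of a relation whose inputs carry
function parts `gA`, `gB`. -/
noncomputable def Cphd {X Y O G : Type} (R : X → Y → O → Prop)
    (gA : X → G) (gB : Y → G) : ℕ :=
  sInf {d | ∃ P : HDProt X Y O d, P.Solves R ∧ P.PartiallyHD gA gB}

/-! ### Transcript sets for multiplexor protocols (half-duplex version) -/

section MuxSetsHD

variable {m n : ℕ} {f : BFunc m} {O : Type} {d : ℕ}

/-- `X_π(g)`: the matrices `X` such that Alice's input `(g, X)` is consistent with `tr`. -/
def XpiHD (P : HDProt (AliceMux m n f) (BobMux m n f) O d) (tr : List Bool)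
    (g : BFunc n) : Set (BMat m n) :=
  {X | ∃ h : compFG f g X = true, P.alice.Cons tr ⟨(g, X), h⟩}

/-- `Y_π(g)`: the matrices `Y` such that Bob's input `(g, Y)` is consistent with `tr`. -/
def YpiHD (P : HDProt (AliceMux m n f) (BobMux m n f) O d) (tr : List Bool)
    (g : BFunc n) : Set (BMat m n) :=
  {Y | ∃ h : compFG f g Y = false, P.bob.Cons tr ⟨(g, Y), h⟩}

/-- `A_π(g)`: the strings `a ∈ f⁻¹(1)` with `X_π(g, a) ≠ ∅`. -/
def ApiHD (P : HDProt (AliceMux m n f) (BobMux m n f) O d) (tr : List Bool)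
    (g : BFunc n) : Set (Fin m → Bool) :=
  {a | f a = true ∧ (XpiHD P tr g ∩ ginv g a).Nonempty}

/-- `B_π(g)`: the strings `b ∈ f⁻¹(0)` with `Y_π(g, b) ≠ ∅`. -/
def BpiHD (P : HDProt (AliceMux m n f) (BobMux m n f) O d) (tr : List Bool)
    (g : BFunc n) : Set (Fin m → Bool) :=
  {b | f b = false ∧ (YpiHD P tr g ∩ ginv g b).Nonempty}

/-- `V_π` (version via nonempty `X_π(g)` and `Y_π(g)`). -/
def VpiHD (P : HDProt (AliceMux m n f) (BobMux m n f) O d) (tr : List Bool) :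
    Set (BFunc n) :=
  {g | (XpiHD P tr g).Nonempty ∧ (YpiHD P tr g).Nonempty}

/-- `V_π` (version via nonempty `A_π(g)` and `B_π(g)`). -/
def VpiABHD (P : HDProt (AliceMux m n f) (BobMux m n f) O d) (tr : List Bool) :
    Set (BFunc n) :=
  {g | (ApiHD P tr g).Nonempty ∧ (BpiHD P tr g).Nonempty}

/-- A transcript `tr` of `P` is `γ`-alive (with the universal constant `κ = 8`). -/
def AliveHD (γ : ℝ) (P : HDProt (AliceMux m n f) (BobMux m n f) O d)
    (tr : List Bool) : Prop :=
  P.IsTranscript tr ∧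
  ∃ V : Set (BFunc n), V ⊆ VpiABHD P tr ∧ (∀ g ∈ V, IsBalanced g) ∧
    ((2 : ℝ) ^ (-(m : ℝ)) * ((BalancedFuncs n).ncard : ℝ) ≤ (V.ncard : ℝ)) ∧
    (∀ g ∈ V,
      (1 - γ) * m + 8 * Real.logb 2 m + 8 ≤
        Real.logb 2 (Lrect (ApiHD P tr g) (BpiHD P tr g))) ∧
    (∀ g ∈ V, ∀ a ∈ ApiHD P tr g,
      (2 : ℝ) ^ (-γ * m + 1) * ((ginv g a).ncard : ℝ) ≤
        ((XpiHD P tr g ∩ ginv g a).ncard : ℝ)) ∧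
    (∀ g ∈ V, ∀ b ∈ BpiHD P tr g,
      (2 : ℝ) ^ (-γ * m + 1) * ((ginv g b).ncard : ℝ) ≤
        ((YpiHD P tr g ∩ ginv g b).ncard : ℝ))

/-- The weak intersection property for two functions `gA`, `gB`. -/
def WeakIntersectHD (P : HDProt (AliceMux m n f) (BobMux m n f) O d) (tr : List Bool)
    (gA gB : BFunc n) : Prop :=
  ∃ X ∈ XpiHD P tr gA, ∃ Y ∈ YpiHD P tr gB,
    ∀ i : Fin m, gA (X i) ≠ gB (Y i) → X i = Y i

/-- The characteristic graph of `tr` for `KW_f ⋄ MUX_n`, on vertex set `V`. -/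
def charGraphDiamHD (P : HDProt (AliceMux m n f) (BobMux m n f) O d) (tr : List Bool)
    (V : Set (BFunc n)) : SimpleGraph ↥V where
  Adj gA gB := gA ≠ gB ∧
    ((XpiHD P tr ↑gA ∩ YpiHD P tr ↑gB).Nonempty ∨
      (XpiHD P tr ↑gB ∩ YpiHD P tr ↑gA).Nonempty)
  symm := by
    constructor
    rintro a b ⟨hne, h⟩
    exact ⟨hne.symm, h.symm⟩
  loopless := by
    constructor
    rintro a ⟨hne, -⟩
    exact hne rfl

/-- The characteristic graph of `tr` for `KW_f ⊛ MUX_n`, on vertex set `V`. -/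
def charGraphStrongHD (P : HDProt (AliceMux m n f) (BobMux m n f) O d) (tr : List Bool)
    (V : Set (BFunc n)) : SimpleGraph ↥V where
  Adj gA gB := gA ≠ gB ∧
    (WeakIntersectHD P tr ↑gA ↑gB ∨ WeakIntersectHD P tr ↑gB ↑gA)
  symm := by
    constructor
    rintro a b ⟨hne, h⟩
    exact ⟨hne.symm, h.symm⟩
  loopless := by
    constructor
    rintro a ⟨hne, -⟩
    exact hne rfl

end MuxSetsHD

/-! ### Transcript sets for multiplexor protocols (standard deterministic version) -/

section MuxSetsP

variable {m n : ℕ} {f : BFunc m} {O : Type}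

/-- `X_π(g)` for a standard deterministic protocol. -/
def XpiP (p : Prot (AliceMux m n f) (BobMux m n f) O) (tr : List Bool)
    (g : BFunc n) : Set (BMat m n) :=
  {X | ∃ h : compFG f g X = true, Prot.ConsA p tr ⟨(g, X), h⟩}

/-- `Y_π(g)` for a standard deterministic protocol. -/
def YpiP (p : Prot (AliceMux m n f) (BobMux m n f) O) (tr : List Bool)
    (g : BFunc n) : Set (BMat m n) :=
  {Y | ∃ h : compFG f g Y = false, Prot.ConsB p tr ⟨(g, Y), h⟩}

/-- `A_π(g)` for a standard deterministic protocol. -/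
def ApiP (p : Prot (AliceMux m n f) (BobMux m n f) O) (tr : List Bool)
    (g : BFunc n) : Set (Fin m → Bool) :=
  {a | f a = true ∧ (XpiP p tr g ∩ ginv g a).Nonempty}

/-- `B_π(g)` for a standard deterministic protocol. -/
def BpiP (p : Prot (AliceMux m n f) (BobMux m n f) O) (tr : List Bool)
    (g : BFunc n) : Set (Fin m → Bool) :=
  {b | f b = false ∧ (YpiP p tr g ∩ ginv g b).Nonempty}

/-- `V_π` (version via nonempty `X_π(g)` and `Y_π(g)`), standard protocols. -/
def VpiPset (p : Prot (AliceMux m n f) (BobMux m n f) O) (tr : List Bool) :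
    Set (BFunc n) :=
  {g | (XpiP p tr g).Nonempty ∧ (YpiP p tr g).Nonempty}

/-- `V_π` (version via nonempty `A_π(g)` and `B_π(g)`), standard protocols. -/
def VpiABP (p : Prot (AliceMux m n f) (BobMux m n f) O) (tr : List Bool) :
    Set (BFunc n) :=
  {g | (ApiP p tr g).Nonempty ∧ (BpiP p tr g).Nonempty}

/-- `γ`-alive transcripts (with `κ = 8`), standard protocols. -/
def AliveP (γ : ℝ) (p : Prot (AliceMux m n f) (BobMux m n f) O)
    (tr : List Bool) : Prop :=
  p.IsTranscript tr ∧
  ∃ V : Set (BFunc n), V ⊆ VpiABP p tr ∧ (∀ g ∈ V, IsBalanced g) ∧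
    ((2 : ℝ) ^ (-(m : ℝ)) * ((BalancedFuncs n).ncard : ℝ) ≤ (V.ncard : ℝ)) ∧
    (∀ g ∈ V,
      (1 - γ) * m + 8 * Real.logb 2 m + 8 ≤
        Real.logb 2 (Lrect (ApiP p tr g) (BpiP p tr g))) ∧
    (∀ g ∈ V, ∀ a ∈ ApiP p tr g,
      (2 : ℝ) ^ (-γ * m + 1) * ((ginv g a).ncard : ℝ) ≤
        ((XpiP p tr g ∩ ginv g a).ncard : ℝ)) ∧
    (∀ g ∈ V, ∀ b ∈ BpiP p tr g,
      (2 : ℝ) ^ (-γ * m + 1) * ((ginv g b).ncard : ℝ) ≤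
        ((YpiP p tr g ∩ ginv g b).ncard : ℝ))

/-- The weak intersection property, standard protocols. -/
def WeakIntersectP (p : Prot (AliceMux m n f) (BobMux m n f) O) (tr : List Bool)
    (gA gB : BFunc n) : Prop :=
  ∃ X ∈ XpiP p tr gA, ∃ Y ∈ YpiP p tr gB,
    ∀ i : Fin m, gA (X i) ≠ gB (Y i) → X i = Y i

/-- The characteristic graph for `KW_f ⋄ MUX_n`, standard protocols. -/
def charGraphDiamP (p : Prot (AliceMux m n f) (BobMux m n f) O) (tr : List Bool)
    (V : Set (BFunc n)) : SimpleGraph ↥V where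
  Adj gA gB := gA ≠ gB ∧
    ((XpiP p tr ↑gA ∩ YpiP p tr ↑gB).Nonempty ∨
      (XpiP p tr ↑gB ∩ YpiP p tr ↑gA).Nonempty)
  symm := by
    constructor
    rintro a b ⟨hne, h⟩
    exact ⟨hne.symm, h.symm⟩
  loopless := by
    constructor
    rintro a ⟨hne, -⟩
    exact hne rfl

/-- The characteristic graph for `KW_f ⊛ MUX_n`, standard protocols. -/
def charGraphStrongP (p : Prot (AliceMux m n f) (BobMux m n f) O) (tr : List Bool)
    (V : Set (BFunc n)) : SimpleGraph ↥V where
  Adj gA gB := gA ≠ gB ∧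
    (WeakIntersectP p tr ↑gA ↑gB ∨ WeakIntersectP p tr ↑gB ↑gA)
  symm := by
    constructor
    rintro a b ⟨hne, h⟩
    exact ⟨hne.symm, h.symm⟩
  loopless := by
    constructor
    rintro a ⟨hne, -⟩
    exact hne rfl

end MuxSetsP

/-! ### Prefix-thick sets, branching structures and winning sets -/

/-- A set of strings indexed by a linearly ordered set `I` is prefix thick with
degree `t`: it has a nonempty subset whose prefix tree has minimum degree
greater than `t` (the children of the depth-`i` vertex given by the prefix of
`x ∈ S'` are the possible values of the next coordinate among elements of `S'`
agreeing with `x` on all earlier coordinates). -/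
def RowThick {I A : Type} [LT I] (S : Set (I → A)) (t : ℝ) : Prop :=
  ∃ S' : Set (I → A), S' ⊆ S ∧ S'.Nonempty ∧ ∀ x ∈ S', ∀ i : I,
    t < (({a : A | ∃ y ∈ S', (∀ j, j < i → y j = x j) ∧ y i = a}).ncard : ℝ)

/-- Prefix thickness for strings over (possibly different) alphabets `A i`,
with a separate degree bound `t i` at each depth. -/
def DepThick {m : ℕ} {A : Fin m → Type} (S : Set (∀ i, A i)) (t : Fin m → ℝ) : Prop :=
  ∃ S' : Set (∀ i, A i), S' ⊆ S ∧ S'.Nonempty ∧ ∀ x ∈ S', ∀ i : Fin m,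
    t i < (({a : A i | ∃ y ∈ S', (∀ j, j < i → y j = x j) ∧ y i = a}).ncard : ℝ)

/-- The restriction of a set of matrices to the rows in `I` (ordered as in `[m]`). -/
def restrictRows {m n : ℕ} (I : Finset (Fin m)) (S : Set (BMat m n)) :
    Set (↥I → (Fin n → Bool)) :=
  (fun X => fun i : ↥I => X i.1) '' S

/-- The restriction of a set of strings to the coordinates in `I` (ordered as in `[m]`). -/
def restrictStr {m : ℕ} {A : Type} (I : Finset (Fin m)) (S : Set (Fin m → A)) :
    Set (↥I → A) :=
  (fun x => fun i : ↥I => x i.1) '' S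

/-- `w` is a branching structure of `S`: some nonempty subset `S' ⊆ S` has a prefix
tree in which every vertex at depth `i` has exactly `w i` children. -/
def IsBranching {m : ℕ} {A : Type} (S : Set (Fin m → A)) (w : Fin m → ℕ) : Prop :=
  ∃ S' : Set (Fin m → A), S' ⊆ S ∧ S'.Nonempty ∧ ∀ x ∈ S', ∀ i : Fin m,
    ({a : A | ∃ y ∈ S', (∀ j, j < i → y j = x j) ∧ y i = a}).ncard = w i

/-- The winning set of `S`: the set of its branching structures. -/
def WinSet {m : ℕ} {A : Type} (S : Set (Fin m → A)) : Set (Fin m → ℕ) :=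
  {w | IsBranching S w}

/-! ### Non-deterministic communication complexity -/

/-- There is a non-deterministic protocol for the total function `f` with
witness set of size `k`. -/
def NDProtFor {X Y : Type} (f : X × Y → Bool) (k : ℕ) : Prop :=
  ∃ a : X → Fin k → Bool, ∃ b : Y → Fin k → Bool,
    ∀ x y, f (x, y) = true ↔ ∃ w, a x w = true ∧ b y w = true

/-- The minimal size of a (nonempty) witness set of a non-deterministic protocol for `f`;
the non-deterministic communication complexity `NCC(f)` is its base-2 logarithm. -/
noncomputable def NCCcard {X Y : Type} (f : X × Y → Bool) : ℕ :=
  sInf {k | 1 ≤ k ∧ NDProtFor f k}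

/-- A non-deterministic protocol for the partial problem `GraphIneq_G` with witness
set of size `k`: adjacent pairs are accepted, equal pairs are rejected. -/
def GraphIneqProt {V : Type} (G : SimpleGraph V) (k : ℕ) : Prop :=
  ∃ a : V → Fin k → Bool, ∃ b : V → Fin k → Bool,
    (∀ u v, G.Adj u v → ∃ w, a u w = true ∧ b v w = true) ∧
    (∀ v, ¬ ∃ w, a v w = true ∧ b v w = true)

/-- The minimal witness-set size of a non-deterministic protocol for `GraphIneq_G`;
`NCC(GraphIneq_G)` is its base-2 logarithm. -/
noncomputable def NCCgraphIneqCard {V : Type} (G : SimpleGraph V) : ℕ :=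
  sInf {k | 1 ≤ k ∧ GraphIneqProt G k}

/-- `S` is an independent set of `G`. -/
def IndepIn {V : Type} (G : SimpleGraph V) (S : Set V) : Prop :=
  ∀ u ∈ S, ∀ v ∈ S, ¬ G.Adj u v

theorem rowThick_mono {I A : Type} [LT I] {S T : Set (I → A)} (hST : S ⊆ T) {t : ℝ}
    (h : RowThick S t) : RowThick T t := by
  obtain ⟨S', hsub, hne, hch⟩ := h
  exact ⟨S', hsub.trans hST, hne, hch⟩

theorem rowThick_reindex {ι κ A : Type} [LT ι] [LT κ] (e : ι ≃ κ)
    (he : ∀ a b : ι, a < b ↔ e a < e b) {S : Set (κ → A)} {t : ℝ}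
    (h : RowThick S t) : RowThick ((fun z => z ∘ e) '' S) t := by
  obtain ⟨S', hsub, hne, hch⟩ := h
  refine ⟨(fun z => z ∘ e) '' S', Set.image_mono hsub, hne.image _, ?_⟩
  rintro x ⟨z, hz, rfl⟩ i
  have hset : {a | ∃ y ∈ (fun z => z ∘ e) '' S', (∀ j, j < i → y j = (z ∘ e) j) ∧ y i = a}
      = {a | ∃ y ∈ S', (∀ k, k < e i → y k = z k) ∧ y (e i) = a} := by
    ext a
    constructor
    · rintro ⟨y, ⟨w, hw, rfl⟩, hagree, hyi⟩
      refine ⟨w, hw, fun k hk => ?_, hyi⟩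
      have h2 := hagree (e.symm k) (by rw [he]; simpa using hk)
      simpa using h2
    · rintro ⟨w, hw, hagree, hwi⟩
      exact ⟨w ∘ e, ⟨w, hw, rfl⟩, fun j hj => hagree (e j) ((he j i).mp hj), hwi⟩
  rw [hset]
  exact hch z hz (e i)

/-- tail sections -/
def XaSet {m : ℕ} {A : Type} (X : Set (Fin (m+1) → A)) (a : A) : Set (Fin m → A) :=
  {x | Fin.cons a x ∈ X}

def fsucc (m : ℕ) : Fin m ↪ Fin (m+1) := ⟨Fin.succ, Fin.succ_injective m⟩


lemma ne_zero_of_mem_map {m : ℕ} {J : Finset (Fin m)} {i : Fin (m+1)}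
    (hi : i ∈ J.map (fsucc m)) : i ≠ 0 := by
  obtain ⟨j, hj, hji⟩ := Finset.mem_map.mp hi
  simpa [← hji, fsucc] using Fin.succ_ne_zero j

lemma pred_mem_of_mem_map {m : ℕ} {J : Finset (Fin m)} {i : Fin (m+1)}
    (hi : i ∈ J.map (fsucc m)) : i.pred (ne_zero_of_mem_map hi) ∈ J := by
  obtain ⟨j, hj, hji⟩ := Finset.mem_map.mp hi
  have : i.pred (ne_zero_of_mem_map hi) = j := by
    simp [← hji, fsucc, Fin.pred_succ]
  rw [this]; exact hj

/-- index equiv between J and J.map succ -/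
def succEquiv {m : ℕ} (J : Finset (Fin m)) : ↥J ≃ ↥(J.map (fsucc m)) where
  toFun j := ⟨Fin.succ j.1, Finset.mem_map_of_mem _ j.2⟩
  invFun i := ⟨(i.1).pred (ne_zero_of_mem_map i.2), pred_mem_of_mem_map i.2⟩
  left_inv j := by
    apply Subtype.ext
    simp [Fin.pred_succ]
  right_inv i := by
    apply Subtype.ext
    simp [Fin.succ_pred]

theorem claimC2 {m : ℕ} {A : Type} {X : Set (Fin (m+1) → A)} {a : A}
    {J : Finset (Fin m)} {t : ℝ}
    (h : RowThick (restrictStr J (XaSet X a)) t) :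
    RowThick (restrictStr (J.map (fsucc m)) X) t := by
  set e : ↥(J.map (fsucc m)) ≃ ↥J := (succEquiv J).symm with he_def
  have he : ∀ i i' : ↥(J.map (fsucc m)), i < i' ↔ e i < e i' := by
    intro i i'
    show i.1 < i'.1 ↔ (e i).1 < (e i').1
    show _ ↔ (i.1).pred (ne_zero_of_mem_map i.2) < (i'.1).pred (ne_zero_of_mem_map i'.2)
    rw [Fin.pred_lt_pred_iff]
  have himg := rowThick_reindex e he h
  apply rowThick_mono ?_ himg
  rintro z ⟨s, ⟨x, hx, rfl⟩, rfl⟩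
  refine ⟨Fin.cons a x, hx, ?_⟩
  funext i
  obtain ⟨j, hj, hji⟩ := Finset.mem_map.mp i.2
  have hei : e i = ⟨j, hj⟩ := by
    rw [he_def, Equiv.symm_apply_eq]
    exact Subtype.ext hji.symm
  have key : (Fin.cons a x : Fin (m+1) → A) i.1 = x ((e i).1) := by
    rw [hei]
    show (Fin.cons a x : Fin (m+1) → A) i.1 = x j
    have : i.1 = Fin.succ j := hji.symm
    rw [this, Fin.cons_succ]
  exact key

lemma subLT {m : ℕ} {I : Finset (Fin m)} {a b : ↥I} : a < b ↔ a.1 < b.1 :=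
  Subtype.coe_lt_coe.symm

theorem claimC3 {m : ℕ} {A : Type} {X : Set (Fin (m+1) → A)} {J : Finset (Fin m)}
    {t : ℝ} (ht : 0 ≤ t) (K : Finset A)
    (hKcard : t < (K.card : ℝ))
    (hKw : ∀ a ∈ K, RowThick (restrictStr J (XaSet X a)) t) :
    RowThick (restrictStr (insert 0 (J.map (fsucc m))) X) t := by
  classical
  set I : Finset (Fin (m+1)) := insert 0 (J.map (fsucc m)) with hI
  have h0I : (0 : Fin (m+1)) ∈ I := Finset.mem_insert_self _ _
  have hsI : ∀ j ∈ J, Fin.succ j ∈ I := fun j hj =>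
    Finset.mem_insert_of_mem (Finset.mem_map_of_mem _ hj)
  have hI_cases : ∀ i : ↥I, i.1 = 0 ∨ ∃ j, ∃ hj : j ∈ J, i.1 = Fin.succ j := by
    intro i
    rcases Finset.mem_insert.mp i.2 with h | h
    · exact Or.inl h
    · obtain ⟨j, hj, hji⟩ := Finset.mem_map.mp h
      exact Or.inr ⟨j, hj, hji.symm⟩
  choose W hWsub hWne hWch using hKw
  set ext : A → (↥J → A) → (↥I → A) := fun a s i =>
    Fin.cases a (fun j => if hj : j ∈ J then s ⟨j, hj⟩ else a) i.1 with hext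
  have ext_zero : ∀ (a : A) (s : ↥J → A) (i : ↥I), i.1 = 0 → ext a s i = a := by
    intro a s i h
    simp only [hext, h, Fin.cases_zero]
  have ext_succ : ∀ (a : A) (s : ↥J → A) (i : ↥I) (j : Fin m) (hj : j ∈ J),
      i.1 = Fin.succ j → ext a s i = s ⟨j, hj⟩ := by
    intro a s i j hj h
    simp only [hext, h, Fin.cases_succ, dif_pos hj]
  set S' : Set (↥I → A) := {z | ∃ a, ∃ ha : a ∈ K, ∃ s ∈ W a ha, z = ext a s} with hS'
  have hKne : K.Nonempty := Finset.card_pos.mp (by exact_mod_cast ht.trans_lt hKcard)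
  refine ⟨S', ?_, ?_, ?_⟩
  · -- S' ⊆ restrictStr I X
    rintro z ⟨a, ha, s, hs, rfl⟩
    obtain ⟨x, hx, rfl⟩ := hWsub a ha hs
    refine ⟨Fin.cons a x, hx, ?_⟩
    funext i
    rcases hI_cases i with h | ⟨j, hj, h⟩
    · have h1 : (Fin.cons a x : Fin (m+1) → A) i.1 = a := by
        rw [h]; simp
      have h2 := ext_zero a (fun i : ↥J => x i.1) i h
      exact h1.trans h2.symm
    · have h1 : (Fin.cons a x : Fin (m+1) → A) i.1 = x j := by
        rw [h]; simp
      have h2 := ext_succ a (fun i : ↥J => x i.1) i j hj h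
      exact h1.trans h2.symm
  · -- nonempty
    obtain ⟨a, ha⟩ := hKne
    obtain ⟨s, hs⟩ := hWne a ha
    exact ⟨ext a s, a, ha, s, hs, rfl⟩
  · -- children
    rintro z ⟨a, ha, s, hs, rfl⟩ i
    rcases hI_cases i with h0 | ⟨j0, hj0, hsucc⟩
    · -- root: child set is K
      have hset : {a' : A | ∃ y ∈ S', (∀ j, j < i → y j = ext a s j) ∧ y i = a'} = ↑K := by
        ext a'
        constructor
        · rintro ⟨y, ⟨b, hb, s', hs', rfl⟩, -, hyi⟩
          rw [ext_zero b s' i h0] at hyi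
          rw [← hyi]; exact hb
        · intro ha'
          obtain ⟨s', hs'⟩ := hWne a' ha'
          refine ⟨ext a' s', ⟨a', ha', s', hs', rfl⟩, ?_, ext_zero a' s' i h0⟩
          intro j hj
          exfalso
          have h2 : j.1 < i.1 := subLT.mp hj
          rw [h0] at h2
          exact absurd h2 (Fin.not_lt_zero _)
      rw [hset, Set.ncard_coe_finset]
      exact hKcard
    · -- inner: child set equals that of W a ha
      have hset : {a' : A | ∃ y ∈ S', (∀ j, j < i → y j = ext a s j) ∧ y i = a'} =
          {a' : A | ∃ y ∈ W a ha, (∀ j', j' < (⟨j0, hj0⟩ : ↥J) → y j' = s j') ∧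
            y ⟨j0, hj0⟩ = a'} := by
        ext a'
        constructor
        · rintro ⟨y, ⟨b, hb, s', hs', rfl⟩, hagree, hyi⟩
          have hi0lt : (⟨0, h0I⟩ : ↥I) < i := by
            rw [subLT]
            show (0 : Fin (m+1)) < i.1
            rw [hsucc]; exact Fin.succ_pos j0
          have hb_eq : b = a := by
            have h2 := hagree ⟨0, h0I⟩ hi0lt
            rwa [ext_zero b s' ⟨0, h0I⟩ rfl, ext_zero a s ⟨0, h0I⟩ rfl] at h2
          subst hb_eq
          refine ⟨s', hs', ?_, ?_⟩
          · intro j' hj'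
            have hlt : (⟨Fin.succ j'.1, hsI _ j'.2⟩ : ↥I) < i := by
              rw [subLT]
              show Fin.succ j'.1 < i.1
              rw [hsucc]
              exact Fin.succ_lt_succ_iff.mpr (subLT.mp hj')
            have h2 := hagree ⟨Fin.succ j'.1, hsI _ j'.2⟩ hlt
            rw [ext_succ b s' _ j'.1 j'.2 rfl, ext_succ b s _ j'.1 j'.2 rfl] at h2
            simpa using h2
          · rw [ext_succ b s' i j0 hj0 hsucc] at hyi
            exact hyi
        · rintro ⟨y', hy', hagree, hy'i⟩
          refine ⟨ext a y', ⟨a, ha, y', hy', rfl⟩, ?_, ?_⟩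
          · intro j hj
            rcases hI_cases j with hz | ⟨j'', hj'', hjs⟩
            · rw [ext_zero a y' j hz, ext_zero a s j hz]
            · rw [ext_succ a y' j j'' hj'' hjs, ext_succ a s j j'' hj'' hjs]
              apply hagree ⟨j'', hj''⟩
              rw [subLT]
              show j'' < j0
              have h2 : j.1 < i.1 := subLT.mp hj
              rw [hjs, hsucc] at h2
              exact Fin.succ_lt_succ_iff.mp h2
          · rw [ext_succ a y' i j0 hj0 hsucc]
            exact hy'i
      rw [hset]
      exact hWch a ha s hs ⟨j0, hj0⟩

lemma ncard_setOf {α : Type} [Fintype α] (P : α → Prop) [DecidablePred P] :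
    {x | P x}.ncard = (Finset.univ.filter P).card := by
  rw [Set.ncard_eq_toFinset_card', Set.toFinset_setOf]

lemma card_split {m : ℕ} {A : Type} [Fintype A] (X : Set (Fin (m+1) → A)) :
    X.ncard = ∑ a : A, (XaSet X a).ncard := by
  classical
  have hX : X.Finite := Set.toFinite X
  rw [Set.ncard_eq_toFinset_card X hX,
    Finset.card_eq_sum_card_fiberwise (f := fun x => x 0) (t := Finset.univ)
      (fun x _ => Finset.mem_univ _)]
  apply Finset.sum_congr rfl
  intro a _
  have hfin : (XaSet X a).Finite := Set.toFinite _
  rw [Set.ncard_eq_toFinset_card _ hfin]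
  apply Finset.card_bij (fun x _ => Fin.tail x)
  · intro x hx
    simp only [Finset.mem_filter, Set.Finite.mem_toFinset] at hx ⊢
    show Fin.cons a (Fin.tail x) ∈ X
    rw [← hx.2, Fin.cons_self_tail]
    exact hx.1
  · intro x hx y hy hxy
    simp only [Finset.mem_filter, Set.Finite.mem_toFinset] at hx hy
    rw [← Fin.cons_self_tail x, ← Fin.cons_self_tail y, hx.2, hy.2, hxy]
  · intro x' hx'
    simp only [Set.Finite.mem_toFinset] at hx'
    refine ⟨Fin.cons a x', ?_, ?_⟩
    · simp only [Finset.mem_filter, Set.Finite.mem_toFinset]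
      exact ⟨hx', by simp⟩
    · simp [Fin.tail_cons]

lemma fam_split {m : ℕ} (P : Finset (Fin (m+1)) → Prop) :
    ({J : Finset (Fin m) | P (J.map (fsucc m))}).ncard
      + ({J : Finset (Fin m) | P (insert 0 (J.map (fsucc m)))}).ncard
    ≤ ({I : Finset (Fin (m+1)) | P I}).ncard := by
  classical
  have h0 : ∀ J : Finset (Fin m), (0 : Fin (m+1)) ∉ J.map (fsucc m) := by
    intro J h
    obtain ⟨j, _, hj⟩ := Finset.mem_map.mp h
    exact Fin.succ_ne_zero j hj
  have hinj1 : Function.Injective (fun J : Finset (Fin m) => J.map (fsucc m)) :=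
    Finset.map_injective (fsucc m)
  have hinj2 : Function.Injective
      (fun J : Finset (Fin m) => insert (0 : Fin (m+1)) (J.map (fsucc m))) := by
    intro J J' h
    apply hinj1
    have := congrArg (fun s => Finset.erase s (0 : Fin (m+1))) h
    simpa [Finset.erase_insert (h0 J), Finset.erase_insert (h0 J')] using this
  have hdisj : Disjoint
      ((fun J : Finset (Fin m) => J.map (fsucc m)) '' {J | P (J.map (fsucc m))})
      ((fun J : Finset (Fin m) => insert 0 (J.map (fsucc m))) ''
        {J | P (insert 0 (J.map (fsucc m)))}) := by
    rw [Set.disjoint_left]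
    rintro I ⟨J, _, rfl⟩ ⟨J', _, hJ'⟩
    apply h0 J
    rw [show Finset.map (fsucc m) J = insert 0 (Finset.map (fsucc m) J') from hJ'.symm]
    exact Finset.mem_insert_self _ _
  calc ({J : Finset (Fin m) | P (J.map (fsucc m))}).ncard
        + ({J : Finset (Fin m) | P (insert 0 (J.map (fsucc m)))}).ncard
      = ((fun J : Finset (Fin m) => J.map (fsucc m)) '' {J | P (J.map (fsucc m))}).ncard
        + ((fun J : Finset (Fin m) => insert 0 (J.map (fsucc m))) ''
            {J | P (insert 0 (J.map (fsucc m)))}).ncard := by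
        rw [Set.ncard_image_of_injective _ hinj1, Set.ncard_image_of_injective _ hinj2]
    _ = (((fun J : Finset (Fin m) => J.map (fsucc m)) '' {J | P (J.map (fsucc m))})
          ∪ ((fun J : Finset (Fin m) => insert 0 (J.map (fsucc m))) ''
            {J | P (insert 0 (J.map (fsucc m)))})).ncard :=
        (Set.ncard_union_eq hdisj (Set.toFinite _) (Set.toFinite _)).symm
    _ ≤ ({I : Finset (Fin (m+1)) | P I}).ncard := by
        apply Set.ncard_le_ncard ?_ (Set.toFinite _)
        rintro I (⟨J, hJ, rfl⟩ | ⟨J, hJ, rfl⟩)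
        · exact hJ
        · exact hJ

theorem auxMain {A : Type} [Fintype A] (ε : ℝ) (hε : 0 ≤ ε) :
    ∀ (m : ℕ) (X : Set (Fin m → A)),
    Real.exp (-(2*ε)) ^ m * 2 ^ m * (X.ncard : ℝ) ≤
      ((({I : Finset (Fin m) |
          RowThick (restrictStr I X) ((1 / 2 + ε) * (Fintype.card A : ℝ))}).ncard : ℝ))
        * (Fintype.card A : ℝ) ^ m := by
  intro m
  induction m with
  | zero =>
    intro X
    simp only [pow_zero, one_mul, mul_one]
    rcases Set.eq_empty_or_nonempty X with h | h
    · rw [h, Set.ncard_empty]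
      simp only [Nat.cast_zero]
      positivity
    · have hX1 : (X.ncard : ℝ) ≤ 1 := by
        have h2 : X.ncard ≤ 1 := by
          have hu := Set.ncard_le_ncard (Set.subset_univ X) (Set.toFinite _)
          rwa [Set.ncard_univ, Nat.card_unique] at hu
        exact_mod_cast h2
      have hmem : (∅ : Finset (Fin 0)) ∈ {I : Finset (Fin 0) |
          RowThick (restrictStr I X) ((1 / 2 + ε) * (Fintype.card A : ℝ))} := by
        refine ⟨restrictStr ∅ X, subset_rfl, h.image _, ?_⟩
        intro x _ i
        exact i.1.elim0
      have h1 : 1 ≤ (({I : Finset (Fin 0) |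
          RowThick (restrictStr I X) ((1 / 2 + ε) * (Fintype.card A : ℝ))}).ncard : ℝ) := by
        have h2 := (Set.ncard_pos (Set.toFinite _)).mpr ⟨∅, hmem⟩
        exact_mod_cast h2
      linarith
  | succ m ih =>
    intro X
    classical
    set q : ℝ := (Fintype.card A : ℝ) with hq_def
    have hq0 : (0:ℝ) ≤ q := by positivity
    set r : ℝ := Real.exp (-(2*ε)) with hr_def
    have hr0 : 0 < r := Real.exp_pos _
    have hr1 : r ≤ 1 := by
      rw [hr_def]
      calc Real.exp (-(2*ε)) ≤ Real.exp 0 := Real.exp_le_exp.mpr (by linarith)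
        _ = 1 := Real.exp_zero
    set t : ℝ := (1 / 2 + ε) * q with ht_def
    have ht0 : (0:ℝ) ≤ t := mul_nonneg (by linarith) hq0
    by_cases hA : Fintype.card A = 0
    · have hAe : IsEmpty A := Fintype.card_eq_zero_iff.mp hA
      have hX : X = ∅ := by
        ext x
        simp only [Set.mem_empty_iff_false, iff_false]
        intro _
        exact hAe.false (x 0)
      rw [hX, Set.ncard_empty]
      simp only [Nat.cast_zero, mul_zero]
      positivity
    · have hq : 0 < q := by rw [hq_def]; exact_mod_cast Nat.pos_of_ne_zero hA
      set P : Finset (Fin (m+1)) → Prop := fun I => RowThick (restrictStr I X) t with hP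
      set Tm : A → Finset (Fin m) → Prop :=
        fun a J => RowThick (restrictStr J (XaSet X a)) t with hTm
      set k : Finset (Fin m) → ℕ :=
        fun J => (Finset.univ.filter (fun a => Tm a J)).card with hk
      have hIH : ∀ a : A, r ^ m * 2 ^ m * ((XaSet X a).ncard : ℝ) ≤
          (({J : Finset (Fin m) | Tm a J}).ncard : ℝ) * q ^ m := fun a => ih (XaSet X a)
      have hsplit : (X.ncard : ℝ) = ∑ a : A, ((XaSet X a).ncard : ℝ) := by
        rw [card_split X, Nat.cast_sum]
      have hNk : (∑ a : A, ({J : Finset (Fin m) | Tm a J}).ncard)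
          = ∑ J : Finset (Fin m), k J := by
        calc ∑ a : A, ({J : Finset (Fin m) | Tm a J}).ncard
            = ∑ a : A, (Finset.univ.filter (fun J => Tm a J)).card :=
              Finset.sum_congr rfl fun a _ => ncard_setOf _
          _ = ∑ a : A, ∑ J : Finset (Fin m), if Tm a J then 1 else 0 :=
              Finset.sum_congr rfl fun a _ => Finset.card_filter _ _
          _ = ∑ J : Finset (Fin m), ∑ a : A, if Tm a J then 1 else 0 := Finset.sum_comm
          _ = ∑ J : Finset (Fin m), k J :=
              Finset.sum_congr rfl fun J _ => (Finset.card_filter _ _).symm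
      have hpoint : ∀ J : Finset (Fin m), 2 * r * (k J : ℝ) ≤
          q * ((if P (J.map (fsucc m)) then (1:ℝ) else 0) +
               (if P (insert 0 (J.map (fsucc m))) then (1:ℝ) else 0)) := by
        intro J
        by_cases hk0 : k J = 0
        · rw [hk0]
          simp only [Nat.cast_zero, mul_zero]
          apply mul_nonneg hq0
          apply add_nonneg <;> (split <;> norm_num)
        · have hk1 : 1 ≤ k J := Nat.one_le_iff_ne_zero.mpr hk0
          have hex : ∃ a, Tm a J := by
            obtain ⟨a, ha⟩ := Finset.card_pos.mp (lt_of_lt_of_le Nat.zero_lt_one hk1)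
            exact ⟨a, (Finset.mem_filter.mp ha).2⟩
          obtain ⟨a, hTa⟩ := hex
          have hP1 : P (J.map (fsucc m)) := claimC2 hTa
          rw [if_pos hP1]
          by_cases hkt : (k J : ℝ) ≤ t
          · have h2 : (0:ℝ) ≤ (if P (insert 0 (J.map (fsucc m))) then (1:ℝ) else 0) := by
              split <;> norm_num
            have hcore : 2 * r * (k J : ℝ) ≤ q := by
              have h3 : r * (1 + 2*ε) ≤ 1 := by
                have h4 := Real.add_one_le_exp (2*ε)
                calc r * (1+2*ε) ≤ r * Real.exp (2*ε) := by
                      apply mul_le_mul_of_nonneg_left (by linarith) hr0.le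
                  _ = 1 := by rw [hr_def, ← Real.exp_add]; norm_num
              calc 2 * r * (k J : ℝ) ≤ 2 * r * t :=
                    mul_le_mul_of_nonneg_left hkt (by positivity)
                _ = r * (1 + 2*ε) * q := by rw [ht_def]; ring
                _ ≤ 1 * q := mul_le_mul_of_nonneg_right h3 hq0
                _ = q := one_mul q
            nlinarith [h2, hq0]
          · push_neg at hkt
            have hP2 : P (insert 0 (J.map (fsucc m))) :=
              claimC3 ht0 (Finset.univ.filter (fun a => Tm a J)) hkt
                (fun a ha => (Finset.mem_filter.mp ha).2)
            rw [if_pos hP2]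
            have hkq : (k J : ℝ) ≤ q := by
              rw [hq_def]
              have := (Finset.card_filter_le Finset.univ (fun a => Tm a J)).trans
                (le_of_eq (Finset.card_univ))
              exact_mod_cast this
            nlinarith [hr1, hr0.le, hkq, hq0]
      have hfam := fam_split P
      have hN1 : (({J : Finset (Fin m) | P (J.map (fsucc m))}).ncard : ℝ) =
          ∑ J : Finset (Fin m), if P (J.map (fsucc m)) then (1:ℝ) else 0 := by
        rw [ncard_setOf, Finset.card_filter]
        push_cast
        rfl
      have hN2 : (({J : Finset (Fin m) | P (insert 0 (J.map (fsucc m)))}).ncard : ℝ) =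
          ∑ J : Finset (Fin m), if P (insert 0 (J.map (fsucc m))) then (1:ℝ) else 0 := by
        rw [ncard_setOf, Finset.card_filter]
        push_cast
        rfl
      have hc : (∑ a : A, (({J : Finset (Fin m) | Tm a J}).ncard : ℝ))
          = ∑ J : Finset (Fin m), (k J : ℝ) := by
        exact_mod_cast congrArg (Nat.cast (R := ℝ)) hNk
      calc r ^ (m+1) * 2 ^ (m+1) * (X.ncard : ℝ)
          = ∑ a : A, (2*r) * (r^m * 2^m * ((XaSet X a).ncard : ℝ)) := by
            rw [hsplit, Finset.mul_sum]
            apply Finset.sum_congr rfl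
            intro a _
            ring
        _ ≤ ∑ a : A, (2*r) * ((({J : Finset (Fin m) | Tm a J}).ncard : ℝ) * q^m) := by
            apply Finset.sum_le_sum
            intro a _
            exact mul_le_mul_of_nonneg_left (hIH a) (by positivity)
        _ = q^m * ∑ J : Finset (Fin m), 2 * r * (k J : ℝ) := by
            rw [← Finset.mul_sum, ← Finset.sum_mul, hc, ← Finset.mul_sum]
            ring
        _ ≤ q^m * ∑ J : Finset (Fin m),
              q * ((if P (J.map (fsucc m)) then (1:ℝ) else 0) +
                   (if P (insert 0 (J.map (fsucc m))) then (1:ℝ) else 0)) := by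
            apply mul_le_mul_of_nonneg_left (Finset.sum_le_sum fun J _ => hpoint J)
              (by positivity)
        _ = q^(m+1) * ((({J : Finset (Fin m) | P (J.map (fsucc m))}).ncard : ℝ) +
              (({J : Finset (Fin m) | P (insert 0 (J.map (fsucc m)))}).ncard : ℝ)) := by
            rw [← Finset.mul_sum, Finset.sum_add_distrib, hN1, hN2]
            ring
        _ ≤ q^(m+1) * (({I : Finset (Fin (m+1)) | P I}).ncard : ℝ) := by
            apply mul_le_mul_of_nonneg_left ?_ (by positivity)
            exact_mod_cast hfam
        _ = (({I : Finset (Fin (m+1)) | P I}).ncard : ℝ) * q^(m+1) := mul_comm _ _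

theorem statement13 {m : ℕ} {A : Type} [Fintype A] (X : Set (Fin m → A))
    (ε : ℝ) (hε : 0 ≤ ε) :
    (2 : ℝ) ^ (-(2 * Real.logb 2 (Real.exp 1) * ε * m)) * (X.ncard : ℝ) /
        (Fintype.card A : ℝ) ^ m ≤
      (({I : Finset (Fin m) |
          RowThick (restrictStr I X) ((1 / 2 + ε) * (Fintype.card A : ℝ))}).ncard : ℝ) /
        2 ^ m := by
  have haux := auxMain ε hε m X
  have hpow : (2:ℝ) ^ (-(2 * Real.logb 2 (Real.exp 1) * ε * (m:ℝ))) =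
      Real.exp (-(2*ε)) ^ m := by
    rw [Real.rpow_def_of_pos (by norm_num : (0:ℝ) < 2)]
    rw [Real.logb, Real.log_exp]
    have hl2 : Real.log 2 ≠ 0 := ne_of_gt (Real.log_pos (by norm_num))
    have h2 : Real.log 2 * -(2 * (1 / Real.log 2) * ε * (m:ℝ)) = (m:ℝ) * (-(2*ε)) := by
      field_simp
    rw [h2, Real.exp_nat_mul]
  rw [hpow]
  by_cases hA : (Fintype.card A : ℝ) ^ m = 0
  · rw [hA, div_zero]
    positivity
  · have hq : 0 < (Fintype.card A : ℝ) ^ m := lt_of_le_of_ne (by positivity) (Ne.symm hA)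
    rw [div_le_div_iff₀ hq (by positivity)]
    calc Real.exp (-(2*ε)) ^ m * (X.ncard : ℝ) * 2 ^ m
        = Real.exp (-(2*ε)) ^ m * 2 ^ m * (X.ncard : ℝ) := by ring
      _ ≤ _ := haux
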